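/- Let φ : M → N and φ' : M → N' be topological embeddings with open images into proper metric spaces N and N'. Let B ⊆ frontier(φ(M)) and B' ⊆ frontier(φ'(M)) be equivalent boundary sets (each covers the other). If B is compact, then B' is compact. -/

import Mathlib

open Set Topology Filter Metric

/-- `B` (a boundary set of the envelopment `φ`) covers `B'` (a boundary set of the
envelopment `φ'`): for every open neighbourhood `U` of `B` there is an open
neighbourhood `U'` of `B'` with `φ(φ'⁻¹(U' ∩ φ'(M))) ⊆ U`. -/
def Covers {M N N' : Type*} [TopologicalSpace M] [TopologicalSpace N] [TopologicalSpace N']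
    (φ : M → N) (φ' : M → N') (B : Set N) (B' : Set N') : Prop :=
  ∀ U : Set N, IsOpen U → B ⊆ U →
    ∃ U' : Set N', IsOpen U' ∧ B' ⊆ U' ∧ φ '' (φ' ⁻¹' (U' ∩ range φ')) ⊆ U

/-- The range of a sequence escaping to infinity is closed. -/
lemma isClosed_range_of_escape {X : Type*} [MetricSpace X] {y : ℕ → X} {c : X}
    (h : ∀ n : ℕ, (n : ℝ) ≤ dist (y n) c) : IsClosed (range y) := by
  rw [← isOpen_compl_iff, Metric.isOpen_iff]
  intro p hp
  obtain ⟨Nr, hNr⟩ := exists_nat_gt (dist p c + 1)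
  have hF : (y '' (Iio Nr)).Finite := (Set.finite_Iio Nr).image _
  have hpF : p ∈ (y '' (Iio Nr))ᶜ := by
    intro hmem
    obtain ⟨n, -, hn⟩ := hmem
    exact hp ⟨n, hn⟩
  obtain ⟨ε, hε, hball⟩ := Metric.isOpen_iff.mp hF.isClosed.isOpen_compl p hpF
  refine ⟨min ε 1, by positivity, ?_⟩
  rintro q hq ⟨n, rfl⟩
  have hq' : dist (y n) p < min ε 1 := by rwa [mem_ball] at hq
  rcases lt_or_ge n Nr with hn | hn
  · exact hball (mem_ball.mpr (hq'.trans_le (min_le_left _ _))) ⟨n, hn, rfl⟩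
  · have h1 : dist (y n) c ≤ dist (y n) p + dist p c := dist_triangle _ _ _
    have h2 : (n : ℝ) ≥ Nr := Nat.cast_le.mpr hn
    have := h n
    have : (Nr : ℝ) ≤ dist (y n) p + dist p c := by linarith
    have hlt : dist (y n) p < 1 := hq'.trans_le (min_le_right _ _)
    linarith

/-- Key construction: given a sequence `x` in `B'`, produce a nearby sequence `y` in the
image of `φ'` which eventually avoids every closed set disjoint from `B'`. -/
lemma exists_seq_aux {M N N' : Type*} [TopologicalSpace M] [MetricSpace N] [ProperSpace N]
    [MetricSpace N'] {φ : M → N} {φ' : M → N'} {B : Set N} {B' : Set N'}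
    (hB' : B' ⊆ frontier (range φ'))
    (h1 : Covers φ φ' B B') (h2 : Covers φ' φ B' B) (hBc : IsCompact B)
    (x : ℕ → N') (hx : ∀ n, x n ∈ B') :
    ∃ y : ℕ → N', (∀ n, y n ∈ range φ') ∧ (∀ n, dist (y n) (x n) < 1 / (n + 1)) ∧
      ∀ S : Set N', IsClosed S → (∀ a ∈ S, a ∉ B') → ∀ᶠ n in atTop, y n ∉ S := by
  have hthick : ∀ j : ℕ, B ⊆ thickening (1 / (j + 1 : ℝ)) B := fun j =>
    self_subset_thickening (by positivity) B
  choose V hVo hVB' hVsub using fun j : ℕ =>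
    h1 (thickening (1 / (j + 1 : ℝ)) B) isOpen_thickening (hthick j)
  have key : ∀ n : ℕ, ∃ m : M,
      dist (φ' m) (x n) < 1 / (n + 1 : ℝ) ∧ ∀ j ≤ n, φ' m ∈ V j := by
    intro n
    have hxcl : x n ∈ closure (range φ') := frontier_subset_closure (hB' (hx n))
    set W := (⋂ j ∈ Finset.range (n + 1), V j) ∩ ball (x n) (1 / (n + 1 : ℝ)) with hW
    have hWo : IsOpen W := (isOpen_biInter_finset (fun j _ => hVo j)).inter isOpen_ball
    have hxW : x n ∈ W := by
      refine ⟨mem_iInter₂.mpr fun j _ => hVB' j (hx n), ?_⟩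
      simp only [mem_ball, dist_self]
      positivity
    obtain ⟨z, hzW, m, rfl⟩ := mem_closure_iff.mp hxcl W hWo hxW
    exact ⟨m, mem_ball.mp hzW.2, fun j hj =>
      (mem_iInter₂.mp hzW.1) j (Finset.mem_range.mpr (Nat.lt_succ_of_le hj))⟩
  choose m hm1 hm2 using key
  refine ⟨fun n => φ' (m n), fun n => mem_range_self _, hm1, ?_⟩
  intro S hSc hSB'
  obtain ⟨U, hUo, hBU, hUsub⟩ := h2 Sᶜ hSc.isOpen_compl (fun a haB' haS => hSB' a haS haB')
  obtain ⟨δ, hδ, hδsub⟩ := hBc.exists_thickening_subset_open hUo hBU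
  obtain ⟨j, hj⟩ := exists_nat_one_div_lt hδ
  filter_upwards [eventually_ge_atTop j] with n hn
  have hVmem : φ' (m n) ∈ V j := hm2 n j hn
  have hφU : φ (m n) ∈ U := by
    have : φ (m n) ∈ thickening (1 / (j + 1 : ℝ)) B :=
      hVsub j ⟨m n, ⟨hVmem, mem_range_self _⟩, rfl⟩
    exact hδsub (thickening_mono hj.le B this)
  have : φ' (m n) ∈ Sᶜ := hUsub ⟨m n, ⟨hφU, mem_range_self _⟩, rfl⟩
  exact this

theorem isCompact_of_equiv_compact
    {M N N' : Type*} [TopologicalSpace M] [MetricSpace N] [ProperSpace N]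
    [MetricSpace N'] [ProperSpace N']
    {φ : M → N} {φ' : M → N'}
    (hφ : Topology.IsEmbedding φ) (hφo : IsOpen (range φ))
    (hφ' : Topology.IsEmbedding φ') (hφ'o : IsOpen (range φ'))
    {B : Set N} {B' : Set N'}
    (hB : B ⊆ frontier (range φ)) (hB' : B' ⊆ frontier (range φ'))
    (h1 : Covers φ φ' B B') (h2 : Covers φ' φ B' B)
    (hBc : IsCompact B) :
    IsCompact B' := by
  -- points of `range φ'` are never in `B'`
  have hray : ∀ a, a ∈ range φ' → a ∉ B' := by
    intro a ha haB'
    have := hB' haB'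
    rw [hφ'o.frontier_eq] at this
    exact this.2 ha
  have hbounded : Bornology.IsBounded B' := by
    by_contra hb
    rcases B'.eq_empty_or_nonempty with rfl | ⟨c, hc⟩
    · exact hb Bornology.isBounded_empty
    have hx : ∀ n : ℕ, ∃ p, p ∈ B' ∧ (n : ℝ) + 1 < dist p c := by
      intro n
      by_contra h
      push_neg at h
      exact hb ((Metric.isBounded_iff_subset_closedBall c).mpr
        ⟨(n : ℝ) + 1, fun p hp => Metric.mem_closedBall.mpr (h p hp)⟩)
    choose x hxB hxd using hx
    obtain ⟨y, hy1, hy2, hy3⟩ := exists_seq_aux hB' h1 h2 hBc x hxB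
    have hyd : ∀ n : ℕ, (n : ℝ) ≤ dist (y n) c := by
      intro n
      have h1' := hxd n
      have h2' := hy2 n
      have htri : dist (x n) c ≤ dist (x n) (y n) + dist (y n) c := dist_triangle _ _ _
      have hone : (1 : ℝ) / (n + 1) ≤ 1 := by
        rw [div_le_one (by positivity)]
        have : (0 : ℝ) ≤ n := Nat.cast_nonneg n
        linarith
      rw [dist_comm (x n) (y n)] at htri
      linarith
    have hclosed : IsClosed (range y) := isClosed_range_of_escape hyd
    have := (hy3 (range y) hclosed (by rintro a ⟨n, rfl⟩; exact hray _ (hy1 n))).exists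
    obtain ⟨n, hn⟩ := this
    exact hn (mem_range_self n)
  have hclosed : IsClosed B' := by
    rw [← closure_subset_iff_isClosed]
    intro w hw
    by_contra hwB
    have hx : ∀ n : ℕ, ∃ p, p ∈ B' ∧ dist p w < 1 / (n + 1 : ℝ) := by
      intro n
      obtain ⟨b, hb, hbd⟩ := Metric.mem_closure_iff.mp hw (1 / (n + 1 : ℝ)) (by positivity)
      exact ⟨b, hb, by rwa [dist_comm]⟩
    choose x hxB hxd using hx
    obtain ⟨y, hy1, hy2, hy3⟩ := exists_seq_aux hB' h1 h2 hBc x hxB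
    have hy : Tendsto y atTop (𝓝 w) := by
      rw [tendsto_iff_dist_tendsto_zero]
      refine squeeze_zero (fun n => dist_nonneg) (fun n => ?_)
        (g := fun n : ℕ => 2 / (n + 1 : ℝ)) ?_
      · have := (dist_triangle (y n) (x n) w)
        have h1' := hy2 n
        have h2' := hxd n
        have : dist (y n) w ≤ dist (y n) (x n) + dist (x n) w := dist_triangle _ _ _
        calc dist (y n) w ≤ dist (y n) (x n) + dist (x n) w := this
          _ ≤ 1 / (n + 1 : ℝ) + 1 / (n + 1 : ℝ) := by linarith
          _ = 2 / (n + 1 : ℝ) := by ring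
      · have h := (tendsto_const_div_atTop_nhds_zero_nat (2 : ℝ)).comp (tendsto_add_atTop_nat 1)
        refine h.congr fun n => ?_
        simp only [Function.comp_apply]
        push_cast
        ring
    have hScl : IsClosed (insert w (range y)) := hy.isCompact_insert_range.isClosed
    have hSdisj : ∀ a ∈ insert w (range y), a ∉ B' := by
      rintro a (rfl | ⟨n, rfl⟩)
      · exact hwB
      · exact hray _ (hy1 n)
    obtain ⟨n, hn⟩ := (hy3 _ hScl hSdisj).exists
    exact hn (mem_insert_of_mem _ (mem_range_self n))
  exact Metric.isCompact_of_isClosed_isBounded hclosed hbounded
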